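/- Let m ∈ ℕ with m ≥ 3 and let q > m/2. Then every function v ∈ L^q(ℝ^m, Lebesgue measure) satisfies the Kato condition on ℝ^m, i.e. lim_{t → 0⁺} sup_{x ∈ ℝ^m} ∫₀^t ∫_{ℝ^m} (4πs)^{−m/2} exp(−|x − y|²/(4s)) |v(y)| dy ds = 0. -/

import Mathlib

open MeasureTheory

/-- A Borel function `v : ℝ^N → ℝ` (with `N = card ι`) satisfies the Kato condition if
`lim_{t → 0⁺} sup_x ∫₀ᵗ ∫ (4πs)^{-N/2} exp(-|x-y|²/(4s)) |v(y)| dy ds = 0`,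
where `(4πs)^{-N/2} exp(-|x-y|²/(4s))` is the heat kernel of `e^{sΔ}` on `ℝ^N`. -/
def IsKato {ι : Type*} [Fintype ι] (v : EuclideanSpace ℝ ι → ℝ) : Prop :=
  Filter.Tendsto
    (fun t : ℝ => ⨆ x : EuclideanSpace ℝ ι,
      ∫⁻ s in Set.Ioc (0 : ℝ) t, ∫⁻ y,
        ENNReal.ofReal ((4 * Real.pi * s) ^ (-(Fintype.card ι : ℝ) / 2) *
          Real.exp (-‖x - y‖ ^ 2 / (4 * s)) * |v y|))
    (nhdsWithin 0 (Set.Ioi 0)) (nhds 0)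

private lemma kato_gauss (m : ℕ) {b : ℝ} (hb : 0 < b) (x : EuclideanSpace ℝ (Fin m)) :
    ∫⁻ y : EuclideanSpace ℝ (Fin m), ENNReal.ofReal (Real.exp (-b * ‖x - y‖ ^ 2))
      = ENNReal.ofReal ((Real.pi / b) ^ ((m : ℝ) / 2)) := by
  have hmeas : Measurable fun z : EuclideanSpace ℝ (Fin m) =>
      ENNReal.ofReal (Real.exp (-b * ‖z‖ ^ 2)) := by fun_prop
  rw [show ∫⁻ y : EuclideanSpace ℝ (Fin m), ENNReal.ofReal (Real.exp (-b * ‖x - y‖ ^ 2))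
      = ∫⁻ z : EuclideanSpace ℝ (Fin m), ENNReal.ofReal (Real.exp (-b * ‖z‖ ^ 2)) from
    (Measure.measurePreserving_sub_left volume x).lintegral_comp hmeas]
  have hint : Integrable (fun z : EuclideanSpace ℝ (Fin m) => Real.exp (-b * ‖z‖ ^ 2)) := by
    have := (GaussianFourier.integrable_cexp_neg_mul_sq_norm_add
      (V := EuclideanSpace ℝ (Fin m)) (b := (b : ℂ)) (by simpa using hb) 0 0).norm
    refine this.congr (Filter.Eventually.of_forall fun z => ?_)
    simp [Complex.norm_exp, ← Complex.ofReal_pow]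
  rw [← ofReal_integral_eq_lintegral_ofReal hint
    (Filter.Eventually.of_forall fun z => (Real.exp_pos _).le)]
  rw [GaussianFourier.integral_rexp_neg_mul_sq_norm hb]
  congr 1
  rw [finrank_euclideanSpace_fin]

/-- For `m ≥ 3` and `q > m/2`, every `v ∈ L^q(ℝ^m)` satisfies the Kato condition. -/
theorem memLp_isKato (m : ℕ) (hm : 3 ≤ m) (q : ℝ) (hq : (m : ℝ) / 2 < q)
    (v : EuclideanSpace ℝ (Fin m) → ℝ)
    (hv : MemLp v (ENNReal.ofReal q) volume) : IsKato v := by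
  have hm3 : (3 : ℝ) ≤ (m : ℝ) := by exact_mod_cast hm
  have hq1 : 1 < q := by linarith
  have hq0 : 0 < q := by linarith
  set r := Real.conjExponent q with hr_def
  have hqr : q.HolderConjugate r := Real.HolderConjugate.conjExponent hq1
  have hr0 : 0 < r := hqr.symm.pos
  set α : ℝ := (m : ℝ) / (2 * q) with hα_def
  have hα0 : 0 < α := by positivity
  have hα1 : α < 1 := by
    rw [hα_def, div_lt_one (by positivity)]; linarith
  set B : ENNReal := (∫⁻ y, ENNReal.ofReal |v y| ^ q) ^ (1 / q) with hB_def
  have hvm : AEMeasurable v volume := hv.1.aemeasurable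
  have hBtop : B ≠ ⊤ := by
    have hB_eq : B = eLpNorm v (ENNReal.ofReal q) volume := by
      rw [eLpNorm_eq_lintegral_rpow_enorm_toReal
        (by simp [ENNReal.ofReal_eq_zero]; linarith) ENNReal.ofReal_ne_top,
        ENNReal.toReal_ofReal hq0.le, hB_def]
      congr 1
      refine lintegral_congr fun y => ?_
      rw [Real.enorm_eq_ofReal_abs]
    rw [hB_eq]
    exact hv.2.ne
  set C : ℝ := (4 * Real.pi) ^ (-(m : ℝ) / 2) * (4 * Real.pi / r) ^ ((m : ℝ) / 2 * (1 / r)) with hC_def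
  have hC0 : 0 < C := by
    have := Real.pi_pos
    positivity
  -- exponent identity
  have hexp : -(m : ℝ) / 2 + (m : ℝ) / 2 * (1 / r) = -α := by
    have h := hqr.inv_add_inv_eq_one
    have h2 : (1 : ℝ) / r = 1 - 1 / q := by
      rw [one_div, one_div]; linarith
    rw [h2, hα_def]
    field_simp
    ring
  -- inner bound
  have inner_bound : ∀ s : ℝ, 0 < s → ∀ x : EuclideanSpace ℝ (Fin m),
      (∫⁻ y, ENNReal.ofReal ((4 * Real.pi * s) ^ (-(m : ℝ) / 2) *
          Real.exp (-‖x - y‖ ^ 2 / (4 * s)) * |v y|))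
        ≤ ENNReal.ofReal (C * s ^ (-α)) * B := by
    intro s hs x
    have hpi := Real.pi_pos
    have ha : (0:ℝ) ≤ (4 * Real.pi * s) ^ (-(m : ℝ) / 2) := Real.rpow_nonneg (by positivity) _
    have e1 : (fun y : EuclideanSpace ℝ (Fin m) => ENNReal.ofReal
          ((4 * Real.pi * s) ^ (-(m : ℝ) / 2) * Real.exp (-‖x - y‖ ^ 2 / (4 * s)) * |v y|))
        = fun y => ENNReal.ofReal ((4 * Real.pi * s) ^ (-(m : ℝ) / 2)) *
          ((fun y => ENNReal.ofReal (Real.exp (-‖x - y‖ ^ 2 / (4 * s)))) *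
           (fun y => ENNReal.ofReal |v y|)) y := by
      funext y
      simp only [Pi.mul_apply]
      rw [mul_assoc, ENNReal.ofReal_mul ha, ENNReal.ofReal_mul (Real.exp_pos _).le]
    rw [e1, lintegral_const_mul' _ _ ENNReal.ofReal_ne_top]
    have hf : AEMeasurable (fun y : EuclideanSpace ℝ (Fin m) =>
        ENNReal.ofReal (Real.exp (-‖x - y‖ ^ 2 / (4 * s)))) volume := by fun_prop
    have hg : AEMeasurable (fun y : EuclideanSpace ℝ (Fin m) =>
        ENNReal.ofReal |v y|) volume :=
      ENNReal.measurable_ofReal.comp_aemeasurable (continuous_abs.measurable.comp_aemeasurable hvm)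
    have hholder := ENNReal.lintegral_mul_le_Lp_mul_Lq volume hqr.symm hf hg
    have hb : 0 < r / (4 * s) := by positivity
    have egauss : (∫⁻ y : EuclideanSpace ℝ (Fin m),
          ENNReal.ofReal (Real.exp (-‖x - y‖ ^ 2 / (4 * s))) ^ r)
        = ENNReal.ofReal ((Real.pi / (r / (4 * s))) ^ ((m : ℝ) / 2)) := by
      have e2 : ∀ y : EuclideanSpace ℝ (Fin m),
          ENNReal.ofReal (Real.exp (-‖x - y‖ ^ 2 / (4 * s))) ^ r
            = ENNReal.ofReal (Real.exp (-(r / (4 * s)) * ‖x - y‖ ^ 2)) := by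
        intro y
        rw [ENNReal.ofReal_rpow_of_nonneg (Real.exp_pos _).le hr0.le, ← Real.exp_mul]
        congr 1
        field_simp
      simp_rw [e2]
      exact kato_gauss m hb x
    calc ENNReal.ofReal ((4 * Real.pi * s) ^ (-(m : ℝ) / 2)) *
          ∫⁻ y, ((fun y => ENNReal.ofReal (Real.exp (-‖x - y‖ ^ 2 / (4 * s)))) *
           (fun y => ENNReal.ofReal |v y|)) y
        ≤ ENNReal.ofReal ((4 * Real.pi * s) ^ (-(m : ℝ) / 2)) *
          ((∫⁻ y, ENNReal.ofReal (Real.exp (-‖x - y‖ ^ 2 / (4 * s))) ^ r) ^ (1 / r) * B) :=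
          mul_le_mul_right hholder _
      _ = ENNReal.ofReal (C * s ^ (-α)) * B := by
          rw [egauss, ENNReal.ofReal_rpow_of_nonneg (Real.rpow_nonneg (by positivity) _)
            (by positivity), ← mul_assoc, ← ENNReal.ofReal_mul ha]
          have h3 : Real.pi / (r / (4 * s)) = 4 * Real.pi / r * s := by
            field_simp
          have hreal : (4 * Real.pi * s) ^ (-(m : ℝ) / 2) *
              ((Real.pi / (r / (4 * s))) ^ ((m : ℝ) / 2)) ^ (1 / r) = C * s ^ (-α) := by
            rw [h3, ← Real.rpow_mul (by positivity),
              Real.mul_rpow (by positivity) hs.le, Real.mul_rpow (by positivity) hs.le,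
              hC_def, mul_mul_mul_comm, ← Real.rpow_add hs, hexp]
          rw [hreal]
  -- outer bound
  have outer : ∀ t : ℝ, 0 < t →
      (⨆ x : EuclideanSpace ℝ (Fin m), ∫⁻ s in Set.Ioc (0 : ℝ) t, ∫⁻ y,
        ENNReal.ofReal ((4 * Real.pi * s) ^ (-(m : ℝ) / 2) *
          Real.exp (-‖x - y‖ ^ 2 / (4 * s)) * |v y|))
        ≤ ENNReal.ofReal (C * t ^ (1 - α) / (1 - α)) * B := by
    intro t ht
    refine iSup_le fun x => ?_
    have hint : IntegrableOn (fun s : ℝ => C * s ^ (-α)) (Set.Ioc 0 t) := by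
      exact ((intervalIntegral.intervalIntegrable_rpow' (by linarith)).1).const_mul C
    have hnn : 0 ≤ᵐ[volume.restrict (Set.Ioc (0:ℝ) t)] fun s : ℝ => C * s ^ (-α) := by
      refine (ae_restrict_iff' measurableSet_Ioc).2 (Filter.Eventually.of_forall fun s hs => ?_)
      have h0 : (0:ℝ) < s := hs.1
      positivity
    have hval : (∫ s in Set.Ioc (0:ℝ) t, C * s ^ (-α)) = C * t ^ (1 - α) / (1 - α) := by
      rw [← intervalIntegral.integral_of_le ht.le, intervalIntegral.integral_const_mul,
        integral_rpow (Or.inl (by linarith)),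
        Real.zero_rpow (by intro h; nlinarith [hα1] : -α + 1 ≠ 0),
        show -α + 1 = 1 - α from by ring]
      ring
    calc (∫⁻ s in Set.Ioc (0:ℝ) t, ∫⁻ y,
          ENNReal.ofReal ((4 * Real.pi * s) ^ (-(m : ℝ) / 2) *
            Real.exp (-‖x - y‖ ^ 2 / (4 * s)) * |v y|))
        ≤ ∫⁻ s in Set.Ioc (0:ℝ) t, ENNReal.ofReal (C * s ^ (-α)) * B :=
          setLIntegral_mono' measurableSet_Ioc fun s hs => inner_bound s hs.1 x
      _ = (∫⁻ s in Set.Ioc (0:ℝ) t, ENNReal.ofReal (C * s ^ (-α))) * B :=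
          lintegral_mul_const' _ _ hBtop
      _ = ENNReal.ofReal (∫ s in Set.Ioc (0:ℝ) t, C * s ^ (-α)) * B := by
          rw [ofReal_integral_eq_lintegral_ofReal hint hnn]
      _ = ENNReal.ofReal (C * t ^ (1 - α) / (1 - α)) * B := by rw [hval]
  -- limit
  have hlim : Filter.Tendsto (fun t : ℝ => ENNReal.ofReal (C * t ^ (1 - α) / (1 - α)) * B)
      (nhdsWithin 0 (Set.Ioi 0)) (nhds 0) := by
    have h1 : Filter.Tendsto (fun t : ℝ => C * t ^ (1 - α) / (1 - α))
        (nhdsWithin 0 (Set.Ioi 0)) (nhds 0) := by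
      have h2 : Filter.Tendsto (fun t : ℝ => t ^ (1 - α)) (nhdsWithin 0 (Set.Ioi 0))
          (nhds 0) := by
        have h3 := (Real.continuousAt_rpow_const 0 (1 - α) (Or.inr (by linarith))).tendsto
        rw [Real.zero_rpow (by linarith : (1:ℝ) - α ≠ 0)] at h3
        exact h3.mono_left nhdsWithin_le_nhds
      have := (h2.const_mul C).div_const (1 - α)
      simpa using this
    have h2 : Filter.Tendsto (fun t : ℝ => ENNReal.ofReal (C * t ^ (1 - α) / (1 - α)))
        (nhdsWithin 0 (Set.Ioi 0)) (nhds 0) := by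
      rw [← ENNReal.ofReal_zero]
      exact (ENNReal.continuous_ofReal.tendsto 0).comp h1
    simpa using ENNReal.Tendsto.mul_const h2 (Or.inr hBtop)
  rw [IsKato]
  simp only [Fintype.card_fin]
  refine tendsto_of_tendsto_of_tendsto_of_le_of_le' tendsto_const_nhds hlim
    (Filter.Eventually.of_forall fun t => zero_le) ?_
  filter_upwards [self_mem_nhdsWithin] with t ht using outer t ht
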